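/- Let D be a linearly connected digraph with strong components D_1, ..., D_η, η ≥ 2, and let F be the subdigraph of D induced on V_2 ∪ ... ∪ V_η (so F is linearly connected with strong components D_2, ..., D_η). Then for every positive integer m, the m-step competition graph C(F^m) equals the induced subgraph of C(D^m) on V_2 ∪ ... ∪ V_η. Consequently, if the sequence {C(D^m)}_{m≥1} converges to a graph G, then {C(F^m)}_{m≥1} converges to the induced subgraph of G on V_2 ∪ ... ∪ V_η. -/

import Mathlib

/-- A digraph: a finite vertex type with an irreflexive arc relation (no loops). -/
structure Digraph' (V : Type*) where
  Adj : V → V → Prop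
  irrefl : ∀ v, ¬ Adj v v

namespace Digraph'

variable {V : Type*}

/-- There is a directed walk of length `m` from `x` to `y` in `D`;
i.e. `y` is an `m`-step prey of `x`. -/
def HasWalk (D : Digraph' V) (m : ℕ) (x y : V) : Prop :=
  ∃ f : ℕ → V, f 0 = x ∧ f m = y ∧ ∀ t, t < m → D.Adj (f t) (f (t + 1))

/-- There is a directed walk of length `m` from `x` to `y` staying inside `S`. -/
def HasWalkIn (D : Digraph' V) (S : Set V) (m : ℕ) (x y : V) : Prop :=
  ∃ f : ℕ → V, f 0 = x ∧ f m = y ∧ (∀ t, t ≤ m → f t ∈ S) ∧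
    ∀ t, t < m → D.Adj (f t) (f (t + 1))

/-- The `m`-step competition graph `C(D^m)` of `D`. -/
def compGraph (D : Digraph' V) (m : ℕ) : SimpleGraph V where
  Adj u v := u ≠ v ∧ ∃ z, D.HasWalk m u z ∧ D.HasWalk m v z
  symm := by
    refine ⟨?_⟩
    rintro u v ⟨hne, z, h1, h2⟩
    exact ⟨hne.symm, z, h2, h1⟩
  loopless := ⟨fun v h => h.1 rfl⟩

/-- The sequence `{C(D^m)}_{m ≥ 1}` converges. -/
def CompConverges (D : Digraph' V) : Prop :=
  ∃ N : ℕ, 1 ≤ N ∧ ∀ m, N ≤ m → D.compGraph m = D.compGraph N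

/-- The sequence `{C(D^m)}_{m ≥ 1}` converges to the graph `G`. -/
def CompConvergesTo (D : Digraph' V) (G : SimpleGraph V) : Prop :=
  ∃ N : ℕ, 1 ≤ N ∧ ∀ m, N ≤ m → D.compGraph m = G

/-- `D` is linearly connected with strong components `Vset 1, …, Vset η`. -/
structure IsLinConn (D : Digraph' V) (η : ℕ) (Vset : ℕ → Set V) : Prop where
  nonempty : ∀ i, 1 ≤ i → i ≤ η → (Vset i).Nonempty
  cover : ∀ v : V, ∃ i, 1 ≤ i ∧ i ≤ η ∧ v ∈ Vset i
  disjoint' : ∀ i j, 1 ≤ i → i ≤ η → 1 ≤ j → j ≤ η →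
      ∀ v : V, v ∈ Vset i → v ∈ Vset j → i = j
  strong : ∀ i, 1 ≤ i → i ≤ η → ∀ x ∈ Vset i, ∀ y ∈ Vset i,
      ∃ m, D.HasWalkIn (Vset i) m x y
  arcs : ∀ x y : V, D.Adj x y → ∃ i, 1 ≤ i ∧
      ((i ≤ η ∧ x ∈ Vset i ∧ y ∈ Vset i) ∨
       (i + 1 ≤ η ∧ x ∈ Vset i ∧ y ∈ Vset (i + 1)))
  linked : ∀ i, 1 ≤ i → i + 1 ≤ η → ∃ x ∈ Vset i, ∃ y ∈ Vset (i + 1), D.Adj x y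

/-- A component with vertex set `S` is trivial if `S` is a singleton. -/
def IsTrivialComp (S : Set V) : Prop := ∃ v : V, S = {v}

/-- `κ` is the index of imprimitivity of the (strong) component with vertex set `S`:
the gcd of the lengths of all closed directed walks inside `S`. -/
def IsImprimIndex (D : Digraph' V) (S : Set V) (κ : ℕ) : Prop :=
  (∀ (x : V) (m : ℕ), x ∈ S → 0 < m → D.HasWalkIn S m x x → κ ∣ m) ∧
  ∀ d : ℕ, (∀ (x : V) (m : ℕ), x ∈ S → 0 < m → D.HasWalkIn S m x x → d ∣ m) → d ∣ κ

/-- `u` is an imprimitivity labelling on `S`: along any arc inside `S` the label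
increases by one.  Its fibers are the sets of imprimitivity. -/
def IsImprimLabelling (D : Digraph' V) (S : Set V) {κ : ℕ} (u : V → ZMod κ) : Prop :=
  ∀ x ∈ S, ∀ y ∈ S, D.Adj x y → u y = u x + 1

/-- `(k, l) ∈ I(D_{p,p+1})`: some arc goes from a vertex of `U_k^{(p)}` to a vertex of
`U_l^{(p+1)}`. -/
def InI (D : Digraph' V) (Vset : ℕ → Set V) {κ : ℕ → ℕ}
    (u : ∀ i : ℕ, V → ZMod (κ i)) (p : ℕ) (k : ZMod (κ p)) (l : ZMod (κ (p + 1))) : Prop :=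
  ∃ x ∈ Vset p, ∃ y ∈ Vset (p + 1), D.Adj x y ∧ u p x = k ∧ u (p + 1) y = l

/-- `(i, j)` is an edge of the bipartite graph `B_{p,p+1}`. -/
def BAdj (D : Digraph' V) (Vset : ℕ → Set V) {κ : ℕ → ℕ}
    (u : ∀ i : ℕ, V → ZMod (κ i)) (p : ℕ) (i : ZMod (κ p)) (j : ZMod (κ (p + 1))) : Prop :=
  ∃ (k : ZMod (κ p)) (l : ZMod (κ (p + 1))) (a : ℤ),
    InI D Vset u p k l ∧ i = k + 1 + (a : ZMod (κ p)) ∧ j = l + (a : ZMod (κ (p + 1)))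

/-- The competition skeleton graph (CS-graph) `PT_D^{(η)}`: vertices are pairs `⟨r, i⟩`
with `i ∈ ZMod (κ r)` (only `1 ≤ r ≤ η` carries edges); `⟨p, i⟩` and `⟨p+1, j⟩` are
adjacent exactly when `i` and `j` are adjacent in `B_{p,p+1}`. -/
def csGraph (D : Digraph' V) (Vset : ℕ → Set V) {κ : ℕ → ℕ}
    (u : ∀ i : ℕ, V → ZMod (κ i)) (η : ℕ) : SimpleGraph ((r : ℕ) × ZMod (κ r)) where
  Adj a b := ∃ p, 1 ≤ p ∧ p + 1 ≤ η ∧ ∃ (i : ZMod (κ p)) (j : ZMod (κ (p + 1))),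
    BAdj D Vset u p i j ∧
    ((a = ⟨p, i⟩ ∧ b = ⟨p + 1, j⟩) ∨ (a = ⟨p + 1, j⟩ ∧ b = ⟨p, i⟩))
  symm := by
    refine ⟨?_⟩
    rintro a b ⟨p, h1, h2, i, j, hB, hab⟩
    exact ⟨p, h1, h2, i, j, hB,
      hab.elim (fun h => Or.inr ⟨h.2, h.1⟩) (fun h => Or.inl ⟨h.2, h.1⟩)⟩
  loopless := by
    refine ⟨?_⟩
    rintro a ⟨p, _, _, i, j, _, hab⟩
    rcases hab with ⟨ha, hb⟩ | ⟨ha, hb⟩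
    · have h : p = p + 1 := congrArg Sigma.fst (ha.symm.trans hb)
      omega
    · have h : p + 1 = p := congrArg Sigma.fst (ha.symm.trans hb)
      omega

end Digraph'

open Digraph' in
/-- deleting the first strong component: the `m`-step competition graph
of the induced subdigraph `F` on `V_2 ∪ ⋯ ∪ V_η` is the induced subgraph of `C(D^m)`,
and limits correspond. -/
theorem stmt17 {V : Type*} [Fintype V] (D : Digraph' V) (η : ℕ) (Vset : ℕ → Set V)
    (hD : D.IsLinConn η Vset) (hη : 2 ≤ η) :
    let W : Set V := {v | ∃ i, 2 ≤ i ∧ i ≤ η ∧ v ∈ Vset i}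
    let F : Digraph' W := ⟨fun a b => D.Adj a.1 b.1, fun a h => D.irrefl a.1 h⟩
    (∀ m, 1 ≤ m → F.compGraph m = (D.compGraph m).induce W) ∧
    (∀ G : SimpleGraph V, D.CompConvergesTo G → F.CompConvergesTo (G.induce W)) := by

  intro W F
  have hW : ∀ x y : V, x ∈ W → D.Adj x y → y ∈ W := by
    rintro x y ⟨i, hi2, hiη, hxi⟩ hadj
    obtain ⟨j, hj1, hcase⟩ := hD.arcs x y hadj
    rcases hcase with ⟨hjη, hxj, hyj⟩ | ⟨hjη, hxj, hyj⟩
    · have := hD.disjoint' i j (by omega) hiη hj1 hjη x hxi hxj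
      exact ⟨j, by omega, hjη, hyj⟩
    · have := hD.disjoint' i j (by omega) hiη hj1 (by omega) x hxi hxj
      exact ⟨j + 1, by omega, hjη, hyj⟩
  have key : ∀ (m : ℕ) (x : W) (z : V), D.HasWalk m x.1 z ↔
      ∃ zw : W, zw.1 = z ∧ F.HasWalk m x zw := by
    intro m x z
    constructor
    · rintro ⟨f, h0, hm, hadj⟩
      have hmem : ∀ t, t ≤ m → f t ∈ W := by
        intro t ht
        induction t with
        | zero => rw [h0]; exact x.2
        | succ n ih => exact hW _ _ (ih (by omega)) (hadj n (by omega))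
      refine ⟨⟨z, hm ▸ hmem m le_rfl⟩, rfl,
        fun t => ⟨f (min t m), hmem _ (min_le_right _ _)⟩, ?_, ?_, ?_⟩
      · exact Subtype.ext (by simp [h0])
      · exact Subtype.ext (by simp [hm])
      · intro t ht
        show D.Adj (f (min t m)) (f (min (t + 1) m))
        rw [min_eq_left (by omega : t ≤ m), min_eq_left (by omega : t + 1 ≤ m)]
        exact hadj t ht
    · rintro ⟨zw, hz, g, h0, hm, hadj⟩
      exact ⟨fun t => (g t).1, by simp [h0], by simp [hm, hz], hadj⟩
  have hcomp : ∀ m : ℕ, F.compGraph m = (D.compGraph m).induce W := by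
    intro m
    ext u v
    show (u ≠ v ∧ ∃ z, F.HasWalk m u z ∧ F.HasWalk m v z) ↔ _
    show _ ↔ (u.1 ≠ v.1 ∧ ∃ z, D.HasWalk m u.1 z ∧ D.HasWalk m v.1 z)
    constructor
    · rintro ⟨hne, z, h1, h2⟩
      exact ⟨fun h => hne (Subtype.ext h), z.1,
        ((key m u z.1).2 ⟨z, rfl, h1⟩), ((key m v z.1).2 ⟨z, rfl, h2⟩)⟩
    · rintro ⟨hne, z, h1, h2⟩
      obtain ⟨zw, hzw, hw1⟩ := (key m u z).1 h1
      obtain ⟨zw', hzw', hw2⟩ := (key m v z).1 h2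
      have : zw = zw' := Subtype.ext (hzw.trans hzw'.symm)
      exact ⟨fun h => hne (congrArg Subtype.val h), zw, hw1, this ▸ hw2⟩
  refine ⟨fun m _ => hcomp m, ?_⟩
  rintro G ⟨N, hN1, hN⟩
  exact ⟨N, hN1, fun m hm => by rw [hcomp m, hN m hm]⟩
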